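/- Let n ≥ 1 be an integer, k ∈ {0,…,n−1}, and z ∈ ℂ. Then lim_{τ₁→∞} (τ₁/(2πi))^k · ∑_{l=0}^{k} (−1)^{k−l}·binom(k,l)·e^{2πi(l−(n−1)/2)z/τ₁} = z^k, where the limit is taken as τ₁ → ∞ in ℂ (i.e. |τ₁| → ∞). (Thus the renormalized trigonometric basis functions φ̃_k(z,τ₁) = ∑_{l=0}^{k} (−1)^{k−l}(τ₁/(2πi))^k binom(k,l) e^{2πi(l−(n−1)/2)z/τ₁} of V^t_n converge to the monomials z^k of V^r_n, realizing the trigonometric-to-rational degeneration.) -/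

import Mathlib

open Complex Filter

lemma sum_exp_eq (c m : ℂ) (k : ℕ) :
    ∑ l ∈ Finset.range (k + 1),
        (-1 : ℂ) ^ (k - l) * (Nat.choose k l : ℂ) * Complex.exp (((l : ℂ) - m) * c)
      = (Complex.exp c - 1) ^ k * Complex.exp (-(m * c)) := by
  rw [sub_pow, Finset.sum_mul]
  refine Finset.sum_congr rfl fun l hl => ?_
  rw [Finset.mem_range] at hl
  have h1 : ((l : ℂ) - m) * c = (l : ℂ) * c + -(m * c) := by ring
  rw [h1, Complex.exp_add, Complex.exp_nat_mul]
  have h2 : (-1 : ℂ) ^ (k - l) = (-1) ^ (l + k) := by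
    have : l + k = (k - l) + 2 * l := by omega
    simp [this, pow_add]
  rw [h2]
  ring

theorem phiTilde_tendsto_monomial (n : ℕ) (hn : 1 ≤ n) (k : ℕ) (hk : k < n) (z : ℂ) :
    Filter.Tendsto
      (fun τ₁ : ℂ =>
        (τ₁ / (2 * (Real.pi : ℂ) * Complex.I)) ^ k *
          ∑ l ∈ Finset.range (k + 1),
            (-1 : ℂ) ^ (k - l) * (Nat.choose k l : ℂ) *
              Complex.exp (2 * (Real.pi : ℂ) * Complex.I *
                ((l : ℂ) - ((n : ℂ) - 1) / 2) * z / τ₁))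
      (Filter.comap (fun τ₁ : ℂ => ‖τ₁‖) Filter.atTop)
      (nhds (z ^ k)) := by
  set L := Filter.comap (fun τ₁ : ℂ => ‖τ₁‖) Filter.atTop with hL
  set m : ℂ := ((n : ℂ) - 1) / 2 with hm
  have hπ : (2 * (Real.pi : ℂ) * Complex.I) ≠ 0 := by
    simp [Real.pi_ne_zero, Complex.I_ne_zero, Complex.ofReal_ne_zero]
  -- rewrite the sum
  have key : ∀ τ₁ : ℂ,
      (τ₁ / (2 * (Real.pi : ℂ) * Complex.I)) ^ k *
          ∑ l ∈ Finset.range (k + 1),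
            (-1 : ℂ) ^ (k - l) * (Nat.choose k l : ℂ) *
              Complex.exp (2 * (Real.pi : ℂ) * Complex.I *
                ((l : ℂ) - m) * z / τ₁)
      = ((τ₁ / (2 * (Real.pi : ℂ) * Complex.I)) *
          (Complex.exp (2 * (Real.pi : ℂ) * Complex.I * z / τ₁) - 1)) ^ k *
          Complex.exp (-(m * (2 * (Real.pi : ℂ) * Complex.I * z / τ₁))) := by
    intro τ₁
    have := sum_exp_eq (2 * (Real.pi : ℂ) * Complex.I * z / τ₁) m k
    calc (τ₁ / (2 * (Real.pi : ℂ) * Complex.I)) ^ k *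
          ∑ l ∈ Finset.range (k + 1),
            (-1 : ℂ) ^ (k - l) * (Nat.choose k l : ℂ) *
              Complex.exp (2 * (Real.pi : ℂ) * Complex.I * ((l : ℂ) - m) * z / τ₁)
        = (τ₁ / (2 * (Real.pi : ℂ) * Complex.I)) ^ k *
          ∑ l ∈ Finset.range (k + 1),
            (-1 : ℂ) ^ (k - l) * (Nat.choose k l : ℂ) *
              Complex.exp (((l : ℂ) - m) * (2 * (Real.pi : ℂ) * Complex.I * z / τ₁)) := by
          congr 1
          refine Finset.sum_congr rfl fun l _ => ?_
          congr 2
          ring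
      _ = (τ₁ / (2 * (Real.pi : ℂ) * Complex.I)) ^ k *
            ((Complex.exp (2 * (Real.pi : ℂ) * Complex.I * z / τ₁) - 1) ^ k *
              Complex.exp (-(m * (2 * (Real.pi : ℂ) * Complex.I * z / τ₁)))) := by rw [this]
      _ = _ := by rw [mul_pow]; ring
  simp only [key]
  -- limits
  have hinv : Tendsto (fun τ₁ : ℂ => τ₁⁻¹) L (nhds 0) := by
    rw [tendsto_zero_iff_norm_tendsto_zero]
    simp only [norm_inv]
    exact (tendsto_inv_atTop_zero).comp tendsto_comap
  have hw : Tendsto (fun τ₁ : ℂ => 2 * (Real.pi : ℂ) * Complex.I * z / τ₁) L (nhds 0) := by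
    simpa [div_eq_mul_inv] using hinv.const_mul (2 * (Real.pi : ℂ) * Complex.I * z)
  have hexp1 : Tendsto (fun τ₁ : ℂ =>
      Complex.exp (-(m * (2 * (Real.pi : ℂ) * Complex.I * z / τ₁)))) L (nhds 1) := by
    have : Tendsto (fun τ₁ : ℂ => -(m * (2 * (Real.pi : ℂ) * Complex.I * z / τ₁))) L (nhds 0) := by
      simpa using (hw.const_mul m).neg
    simpa [Function.comp_def] using (Complex.continuous_exp.tendsto 0).comp this
  have hne : ∀ᶠ τ₁ : ℂ in L, τ₁ ≠ 0 := by
    have : ∀ᶠ τ₁ : ℂ in L, 1 ≤ ‖τ₁‖ := tendsto_comap.eventually (Filter.eventually_ge_atTop 1)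
    filter_upwards [this] with τ₁ h
    intro h0; rw [h0] at h; simp only [norm_zero] at h; linarith
  have hbase : Tendsto (fun τ₁ : ℂ =>
      (τ₁ / (2 * (Real.pi : ℂ) * Complex.I)) *
        (Complex.exp (2 * (Real.pi : ℂ) * Complex.I * z / τ₁) - 1)) L (nhds z) := by
    rcases eq_or_ne z 0 with hz | hz
    · subst hz
      have heq : (fun τ₁ : ℂ => (τ₁ / (2 * (Real.pi : ℂ) * Complex.I)) *
          (Complex.exp (2 * (Real.pi : ℂ) * Complex.I * 0 / τ₁) - 1)) = fun _ => (0:ℂ) :=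
        funext fun τ₁ => by simp
      rw [heq]
      exact tendsto_const_nhds
    · -- slope of exp at 0
      have hslope : Tendsto (fun w : ℂ => (Complex.exp w - 1) / w)
          (nhdsWithin 0 {(0:ℂ)}ᶜ) (nhds 1) := by
        have h := (Complex.hasDerivAt_exp 0)
        rw [hasDerivAt_iff_tendsto_slope] at h
        simp only [Complex.exp_zero] at h
        convert h using 2 with w
        simp [slope, div_eq_inv_mul]
      have hwne : Tendsto (fun τ₁ : ℂ => 2 * (Real.pi : ℂ) * Complex.I * z / τ₁) L
          (nhdsWithin 0 {(0:ℂ)}ᶜ) := by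
        rw [tendsto_nhdsWithin_iff]
        refine ⟨hw, ?_⟩
        filter_upwards [hne] with τ₁ h1
        simp [div_eq_mul_inv, hπ, hz, h1, mul_ne_zero]
      have hcomp : Tendsto (fun τ₁ : ℂ =>
          (Complex.exp (2 * (Real.pi : ℂ) * Complex.I * z / τ₁) - 1) /
            (2 * (Real.pi : ℂ) * Complex.I * z / τ₁)) L (nhds 1) :=
        hslope.comp hwne
      have := hcomp.const_mul z
      rw [mul_one] at this
      refine this.congr' ?_
      filter_upwards [hne] with τ₁ h1
      field_simp
  have := (hbase.pow k).mul hexp1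
  rw [mul_one] at this
  exact this
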